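/- For any positive integers N and k with k ≥ 1, the harmonic-type sum ∑_{0<m<N} 1/m^k equals ∑_{0<n_1≤n_2≤⋯≤n_k<N} 1/((N-n_1)·n_2⋯n_k). (This is the depth-one case of the Maesaka–Seki–Watanabe formula.) -/

import Mathlib

/-- `flat1 N M j` is the depth-one ♭-sum `∑_{0<n₁≤⋯≤n_j<M} 1/((N-n₁)·n₂⋯n_j)`, built by
summing over the top variable `n_j < M` first (the bottom variable carries `1/(N-n₁)`). -/
def flat1 (N : ℕ) : ℕ → ℕ → ℚ
  | _, 0 => 1
  | M, 1 => ∑ n ∈ Finset.Ioo 0 M, 1 / ((N : ℚ) - (n : ℚ))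
  | M, (j+2) => ∑ n ∈ Finset.Ioo 0 M, (1 / (n : ℚ)) * flat1 N (n+1) (j+1)
  termination_by _ j => j

lemma Ioo_split (M : ℕ) (hM : 0 < M) :
    Finset.Ioo 0 (M+1) = insert M (Finset.Ioo 0 M) := by
  rw [Finset.Ioo_insert_right hM]
  ext x
  simp [Nat.lt_succ_iff]

lemma sum_split {f : ℕ → ℚ} (M : ℕ) (hM : 0 < M) :
    ∑ n ∈ Finset.Ioo 0 (M+1), f n = (∑ n ∈ Finset.Ioo 0 M, f n) + f M := by
  rw [Ioo_split M hM, Finset.sum_insert (by simp), add_comm]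

lemma flat1_one (N M : ℕ) :
    flat1 N M 1 = ∑ n ∈ Finset.Ioo 0 M, 1 / ((N : ℚ) - (n : ℚ)) := by
  rw [flat1]

lemma flat1_two (N M j : ℕ) :
    flat1 N M (j+2) = ∑ n ∈ Finset.Ioo 0 M, (1 / (n : ℚ)) * flat1 N (n+1) (j+1) := by
  rw [flat1]

lemma step1 (N M : ℕ) (hM : 0 < M) :
    flat1 N (M+1) 1 = flat1 N M 1 + 1 / ((N : ℚ) - (M : ℚ)) := by
  rw [flat1_one, flat1_one, sum_split M hM]

lemma step2 (N M j : ℕ) (hM : 0 < M) :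
    flat1 N (M+1) (j+2) = flat1 N M (j+2) + (1 / (M : ℚ)) * flat1 N (M+1) (j+1) := by
  rw [flat1_two, flat1_two, sum_split M hM]

/-- telescoped difference at depth 1 -/
lemma helperA (N : ℕ) (hN : 0 < N) :
    ∀ n, n < N → flat1 (N+1) (n+1) 1 = flat1 N (n+1) 1 + 1 / (N : ℚ) - 1 / ((N : ℚ) - n) := by
  intro n
  induction n with
  | zero =>
      intro _
      rw [flat1_one, flat1_one, show Finset.Ioo 0 1 = (∅ : Finset ℕ) from rfl]
      simp
  | succ n ih =>
      intro hn
      have hn' : n < N := Nat.lt_of_succ_lt hn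
      rw [step1 (N+1) (n+1) n.succ_pos, step1 N (n+1) n.succ_pos, ih hn']
      have h1 : ((N : ℚ) - n) ≠ 0 := by
        have : (n : ℚ) < N := by exact_mod_cast hn'
        intro h; nlinarith
      have h2 : ((N : ℚ) - (n+1)) ≠ 0 := by
        have : ((n:ℚ)+1) < N := by exact_mod_cast hn
        intro h; nlinarith
      push_cast
      ring

/-- Key lemma: `flat1 (N+1) M (j+2) = flat1 N M (j+2) - (1/N) * flat1 N M (j+1)` for `M ≤ N`. -/
lemma lemA (N : ℕ) (hN : 0 < N) :
    ∀ j M, M ≤ N → flat1 (N+1) M (j+2) = flat1 N M (j+2) - (1 / (N : ℚ)) * flat1 N M (j+1) := by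
  intro j
  induction j with
  | zero =>
      intro M hM
      rw [flat1_two, flat1_two, flat1_one, Finset.mul_sum, ← Finset.sum_sub_distrib]
      apply Finset.sum_congr rfl
      intro n hn
      simp only [Finset.mem_Ioo] at hn
      have hnN : n < N := lt_of_lt_of_le hn.2 hM
      rw [helperA N hN n hnN]
      have h0 : (n : ℚ) ≠ 0 := by exact_mod_cast hn.1.ne'
      have h1 : ((N : ℚ) - n) ≠ 0 := by
        have : (n : ℚ) < N := by exact_mod_cast hnN
        intro h; nlinarith
      have hNQ : (N : ℚ) ≠ 0 := Nat.cast_ne_zero.mpr hN.ne'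
      field_simp
      ring
  | succ j ih =>
      intro M hM
      rw [flat1_two, flat1_two (N := N), flat1_two (N := N) (j := j), Finset.mul_sum,
        ← Finset.sum_sub_distrib]
      apply Finset.sum_congr rfl
      intro n hn
      simp only [Finset.mem_Ioo] at hn
      rw [ih (n+1) (lt_of_lt_of_le hn.2 hM)]
      ring

/-- reindexing for depth 1 at `M = N`. -/
lemma base_one (N : ℕ) :
    ∑ m ∈ Finset.Ioo 0 N, (1 : ℚ) / (m : ℚ) = flat1 N N 1 := by
  rw [flat1_one]
  apply Finset.sum_nbij' (i := fun n => N - n) (j := fun n => N - n)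
  · intro a ha
    simp only [Finset.mem_Ioo] at ha ⊢
    omega
  · intro a ha
    simp only [Finset.mem_Ioo] at ha ⊢
    omega
  · intro a ha
    simp only [Finset.mem_Ioo] at ha
    omega
  · intro a ha
    simp only [Finset.mem_Ioo] at ha
    omega
  · intro a ha
    simp only [Finset.mem_Ioo] at ha
    have : ((N - a : ℕ) : ℚ) = (N : ℚ) - a := by
      push_cast [Nat.cast_sub ha.2.le]
      ring
    rw [this]
    congr 1
    ring

lemma main_aux : ∀ N : ℕ, 0 < N → ∀ j : ℕ,
    ∑ m ∈ Finset.Ioo 0 N, (1 : ℚ) / (m : ℚ) ^ (j+1) = flat1 N N (j+1) := by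
  intro N
  induction N with
  | zero => intro h; exact absurd h (lt_irrefl 0)
  | succ N ihN =>
      intro _ j
      rcases Nat.eq_zero_or_pos N with rfl | hN
      · -- N+1 = 1 : empty sums
        cases j with
        | zero => rw [flat1_one, show Finset.Ioo 0 1 = (∅ : Finset ℕ) from rfl]; simp
        | succ j => rw [flat1_two, show Finset.Ioo 0 1 = (∅ : Finset ℕ) from rfl]; simp
      · -- N ≥ 1
        induction j with
        | zero => simpa using base_one (N+1)
        | succ j ihj =>
            have hZ : ∑ m ∈ Finset.Ioo 0 (N+1), (1 : ℚ) / (m : ℚ) ^ (j+2)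
                = (∑ m ∈ Finset.Ioo 0 N, (1 : ℚ) / (m : ℚ) ^ (j+2)) + 1 / (N : ℚ) ^ (j+2) :=
              sum_split N hN
            have hZ' : ∑ m ∈ Finset.Ioo 0 (N+1), (1 : ℚ) / (m : ℚ) ^ (j+1)
                = (∑ m ∈ Finset.Ioo 0 N, (1 : ℚ) / (m : ℚ) ^ (j+1)) + 1 / (N : ℚ) ^ (j+1) :=
              sum_split N hN
            have e1 : flat1 (N+1) (N+1) (j+2)
                = flat1 (N+1) N (j+2) + (1 / (N : ℚ)) * flat1 (N+1) (N+1) (j+1) :=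
              step2 (N+1) N j hN
            have e2 : flat1 (N+1) N (j+2)
                = flat1 N N (j+2) - (1 / (N : ℚ)) * flat1 N N (j+1) :=
              lemA N hN j N le_rfl
            have e3 : flat1 N N (j+2) = ∑ m ∈ Finset.Ioo 0 N, (1 : ℚ) / (m : ℚ) ^ (j+2) :=
              (ihN hN (j+1)).symm
            have e4 : flat1 N N (j+1) = ∑ m ∈ Finset.Ioo 0 N, (1 : ℚ) / (m : ℚ) ^ (j+1) :=
              (ihN hN j).symm
            have e5 : flat1 (N+1) (N+1) (j+1)
                = ∑ m ∈ Finset.Ioo 0 (N+1), (1 : ℚ) / (m : ℚ) ^ (j+1) := ihj.symm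
            rw [hZ, e1, e2, e3, e4, e5, hZ']
            have hNQ : (N : ℚ) ≠ 0 := Nat.cast_ne_zero.mpr hN.ne'
            field_simp
            ring

/-- Depth-one case of the Maesaka–Seki–Watanabe formula:
`∑_{0<m<N} 1/m^k = ∑_{0<n₁≤⋯≤n_k<N} 1/((N-n₁)·n₂⋯n_k)`. -/
theorem depth_one_MSW (N k : ℕ) (hN : 0 < N) (hk : 1 ≤ k) :
    ∑ m ∈ Finset.Ioo 0 N, (1 : ℚ) / (m : ℚ) ^ k = flat1 N N k := by
  obtain ⟨j, rfl⟩ : ∃ j, k = j + 1 := ⟨k - 1, (Nat.succ_pred_eq_of_pos hk).symm⟩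
  exact main_aux N hN j
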